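/- The function $w(t) = \frac{3\zeta(2)}{1-t} \, {}_2F_1\!\left( \tfrac12, \tfrac12; 1; \tfrac{t}{t-1} \right)$ satisfies the singly confluent Heun differential equation $t(1-t)^2 w''(t) + (1-3t)(1-t) w'(t) + \left(t - \tfrac34\right) w(t) = 0$ for $t$ in a neighborhood of $0$ (with $t < 1$, $t \ne 0$ handled by analytic continuation / the equation holding on $(0,1)$). -/

import Mathlib

noncomputable def cc (m : ℕ) : ℝ :=
  (∏ i ∈ Finset.range m, ((1 : ℝ) / 2 + i)) ^ 2 / ((Nat.factorial m : ℝ)) ^ 2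

lemma cc_nonneg (m : ℕ) : 0 ≤ cc m := by unfold cc; positivity

lemma cc_succ (n : ℕ) : cc (n + 1) * ((n : ℝ) + 1) ^ 2 = cc n * ((n : ℝ) + 1 / 2) ^ 2 := by
  unfold cc
  rw [Finset.prod_range_succ, Nat.factorial_succ]
  have h1 : (Nat.factorial n : ℝ) ≠ 0 := Nat.cast_ne_zero.2 (Nat.factorial_ne_zero n)
  have h2 : ((n : ℝ) + 1) ≠ 0 := by positivity
  push_cast
  field_simp
  ring

lemma cc_le_one (m : ℕ) : cc m ≤ 1 := by
  induction m with
  | zero => simp [cc]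
  | succ n ih =>
    have h := cc_succ n
    have h0 := cc_nonneg n
    have hn : (0:ℝ) ≤ (n:ℝ) := Nat.cast_nonneg n
    nlinarith [mul_le_mul_of_nonneg_right ih (sq_nonneg ((n:ℝ)+1/2)), sq_nonneg ((n:ℝ)+1), cc_nonneg (n+1)]

noncomputable def GG (z : ℝ) : ℝ := ∑' n : ℕ, cc n * ((n : ℝ) * z ^ (n - 1))
noncomputable def HH (z : ℝ) : ℝ := ∑' n : ℕ, cc n * ((n : ℝ) * (((n - 1 : ℕ) : ℝ) * z ^ (n - 2)))

lemma pow_bound1 (n : ℕ) : ((3:ℝ)/4) ^ (n - 1) ≤ (4/3) * (3/4) ^ n := by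
  cases n with
  | zero => norm_num
  | succ k => simp only [Nat.add_sub_cancel, pow_succ]; ring_nf; norm_num [le_refl]

lemma pow_bound2 (n : ℕ) : ((3:ℝ)/4) ^ (n - 2) ≤ (16/9) * (3/4) ^ n := by
  match n with
  | 0 => norm_num
  | 1 => norm_num
  | (k+2) => simp only [Nat.add_sub_cancel, pow_succ]; ring_nf; norm_num [le_refl]

lemma sum_geo : Summable (fun n : ℕ => ((3:ℝ)/4) ^ n) :=
  summable_geometric_of_lt_one (by norm_num) (by norm_num)

lemma sum_n_geo : Summable (fun n : ℕ => (n:ℝ) * (3/4) ^ n) := by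
  have := summable_pow_mul_geometric_of_norm_lt_one (R := ℝ) 1 (r := 3/4) (by rw [Real.norm_eq_abs]; rw [abs_of_nonneg]; norm_num; norm_num)
  simpa using this

lemma sum_n2_geo : Summable (fun n : ℕ => (n:ℝ) * (n:ℝ) * (3/4) ^ n) := by
  have := summable_pow_mul_geometric_of_norm_lt_one (R := ℝ) 2 (r := 3/4) (by rw [Real.norm_eq_abs]; rw [abs_of_nonneg]; norm_num; norm_num)
  apply this.congr
  intro n; ring

-- bounds on the three term families, for |z| ≤ 3/4
lemma bound0 {z : ℝ} (hz : |z| ≤ 3/4) (n : ℕ) : ‖cc n * z ^ n‖ ≤ (3/4) ^ n := by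
  rw [Real.norm_eq_abs, abs_mul, abs_pow, abs_of_nonneg (cc_nonneg n)]
  calc cc n * |z| ^ n ≤ 1 * (3/4) ^ n := by
        apply mul_le_mul (cc_le_one n) (pow_le_pow_left₀ (abs_nonneg z) hz n) (by positivity) one_pos.le
    _ = (3/4) ^ n := one_mul _

lemma bound1 {z : ℝ} (hz : |z| ≤ 3/4) (n : ℕ) :
    ‖cc n * ((n : ℝ) * z ^ (n - 1))‖ ≤ (4/3) * ((n:ℝ) * (3/4) ^ n) := by
  rw [Real.norm_eq_abs, abs_mul, abs_mul, abs_pow, abs_of_nonneg (cc_nonneg n),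
    abs_of_nonneg (n.cast_nonneg)]
  have h1 : |z| ^ (n-1) ≤ (3/4:ℝ) ^ (n-1) := pow_le_pow_left₀ (abs_nonneg z) hz _
  have h2 := pow_bound1 n
  have hc := cc_le_one n
  have hc0 := cc_nonneg n
  have hn : (0:ℝ) ≤ n := n.cast_nonneg
  calc cc n * ((n:ℝ) * |z| ^ (n-1)) ≤ 1 * ((n:ℝ) * ((4/3) * (3/4)^n)) := by
        apply mul_le_mul hc _ (by positivity) one_pos.le
        apply mul_le_mul_of_nonneg_left _ hn
        exact le_trans h1 h2
    _ = (4/3) * ((n:ℝ) * (3/4) ^ n) := by ring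

lemma bound2 {z : ℝ} (hz : |z| ≤ 3/4) (n : ℕ) :
    ‖cc n * ((n : ℝ) * (((n - 1 : ℕ) : ℝ) * z ^ (n - 2)))‖ ≤ (16/9) * ((n:ℝ) * (n:ℝ) * (3/4) ^ n) := by
  rw [Real.norm_eq_abs, abs_mul, abs_mul, abs_mul, abs_pow, abs_of_nonneg (cc_nonneg n),
    abs_of_nonneg (n.cast_nonneg), abs_of_nonneg ((n-1:ℕ).cast_nonneg)]
  have h1 : |z| ^ (n-2) ≤ (3/4:ℝ) ^ (n-2) := pow_le_pow_left₀ (abs_nonneg z) hz _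
  have h2 := pow_bound2 n
  have hm : ((n-1:ℕ):ℝ) ≤ (n:ℝ) := Nat.cast_le.2 (Nat.sub_le n 1)
  have hn : (0:ℝ) ≤ n := n.cast_nonneg
  have hm0 : (0:ℝ) ≤ ((n-1:ℕ):ℝ) := (n-1:ℕ).cast_nonneg
  calc cc n * ((n:ℝ) * (((n-1:ℕ):ℝ) * |z| ^ (n-2)))
      ≤ 1 * ((n:ℝ) * ((n:ℝ) * ((16/9) * (3/4)^n))) := by
        apply mul_le_mul (cc_le_one n) _ (by positivity) one_pos.le
        apply mul_le_mul_of_nonneg_left _ hn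
        apply mul_le_mul hm (le_trans h1 h2) (by positivity) hn
    _ = (16/9) * ((n:ℝ) * (n:ℝ) * (3/4) ^ n) := by ring

lemma ball_abs {z : ℝ} (hz : z ∈ Metric.ball (0:ℝ) (3/4)) : |z| < 3/4 := by
  simpa [Real.norm_eq_abs] using Metric.mem_ball.1 hz

lemma sum_u1 : Summable (fun n : ℕ => (4/3) * ((n:ℝ) * (3/4) ^ n)) := sum_n_geo.mul_left _
lemma sum_u2 : Summable (fun n : ℕ => (16/9) * ((n:ℝ) * (n:ℝ) * (3/4) ^ n)) := sum_n2_geo.mul_left _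

lemma hasDerivAt_term (n : ℕ) (x : ℝ) :
    HasDerivAt (fun y : ℝ => cc n * y ^ n) (cc n * ((n : ℝ) * x ^ (n - 1))) x :=
  (hasDerivAt_pow n x).const_mul (cc n)

lemma hasDerivAt_term2 (n : ℕ) (x : ℝ) :
    HasDerivAt (fun y : ℝ => cc n * ((n : ℝ) * y ^ (n - 1)))
      (cc n * ((n : ℝ) * (((n - 1 : ℕ) : ℝ) * x ^ (n - 2)))) x := by
  have h := (hasDerivAt_pow (n - 1) x).const_mul (cc n * (n : ℝ))
  have e1 : n - 1 - 1 = n - 2 := by omega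
  rw [e1] at h
  simpa [mul_assoc] using h

lemma sum_at_zero : Summable (fun n : ℕ => cc n * (0:ℝ) ^ n) := by
  apply summable_of_ne_finset_zero (s := {0})
  intro n hn
  simp only [Finset.mem_singleton] at hn
  rw [zero_pow hn, mul_zero]

lemma sum_at_zero2 : Summable (fun n : ℕ => cc n * ((n:ℝ) * (0:ℝ) ^ (n-1))) := by
  apply summable_of_ne_finset_zero (s := {0, 1})
  intro n hn
  simp only [Finset.mem_insert, Finset.mem_singleton] at hn
  push_neg at hn
  rw [zero_pow (by omega), mul_zero, mul_zero]

lemma hG {y : ℝ} (hy : y ∈ Metric.ball (0:ℝ) (3/4)) :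
    HasDerivAt (fun z => ∑' n : ℕ, cc n * z ^ n) (GG y) y := by
  apply hasDerivAt_tsum_of_isPreconnected sum_u1 Metric.isOpen_ball
    (convex_ball (0:ℝ) (3/4)).isPreconnected
    (fun n z _ => hasDerivAt_term n z)
    (fun n z hz => bound1 (ball_abs hz).le n)
    (Metric.mem_ball_self (by norm_num)) sum_at_zero hy

lemma hH {y : ℝ} (hy : y ∈ Metric.ball (0:ℝ) (3/4)) :
    HasDerivAt GG (HH y) y := by
  apply hasDerivAt_tsum_of_isPreconnected sum_u2 Metric.isOpen_ball
    (convex_ball (0:ℝ) (3/4)).isPreconnected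
    (fun n z _ => hasDerivAt_term2 n z)
    (fun n z hz => bound2 (ball_abs hz).le n)
    (Metric.mem_ball_self (by norm_num)) sum_at_zero2 hy

-- the hypergeometric ODE
lemma hyper_ode {z : ℝ} (hz : |z| < 3/4) :
    z * (1 - z) * HH z + (1 - 2*z) * GG z - (∑' n : ℕ, cc n * z ^ n) / 4 = 0 := by
  have hzle := hz.le
  have Sa : Summable (fun n : ℕ => cc n * z ^ n) :=
    Summable.of_norm_bounded sum_geo (bound0 hzle)
  have Sb : Summable (fun n : ℕ => cc n * ((n:ℝ) * z ^ (n-1))) :=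
    Summable.of_norm_bounded sum_u1 (bound1 hzle)
  have Sd : Summable (fun n : ℕ => cc n * ((n:ℝ) * (((n-1:ℕ):ℝ) * z ^ (n-2)))) :=
    Summable.of_norm_bounded sum_u2 (bound2 hzle)
  have SA : Summable (fun n : ℕ => cc n * ((n:ℝ)^2 * z ^ (n-1))) := by
    apply Summable.of_norm_bounded sum_u2
    intro n
    rw [Real.norm_eq_abs]
    simp only [abs_mul, abs_pow, sq_abs, abs_of_nonneg (cc_nonneg n)]
    have h1 : |z| ^ (n-1) ≤ (3/4:ℝ) ^ (n-1) := pow_le_pow_left₀ (abs_nonneg z) hzle _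
    have h2 := pow_bound1 n
    have hn : (0:ℝ) ≤ n := n.cast_nonneg
    calc cc n * ((n:ℝ)^2 * |z| ^ (n-1)) ≤ 1 * ((n:ℝ)^2 * ((4/3) * (3/4)^n)) := by
          apply mul_le_mul (cc_le_one n) _ (by positivity) one_pos.le
          exact mul_le_mul_of_nonneg_left (le_trans h1 h2) (by positivity)
      _ ≤ (16/9) * ((n:ℝ) * (n:ℝ) * (3/4) ^ n) := by nlinarith [pow_nonneg (by norm_num : (0:ℝ) ≤ 3/4) n, sq_nonneg (n:ℝ)]
  have SB : Summable (fun n : ℕ => cc n * (((n:ℝ)+1/2)^2 * z ^ n)) := by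
    apply Summable.of_norm_bounded ((sum_n2_geo.add sum_n_geo).add sum_geo)
    intro n
    rw [Real.norm_eq_abs]
    simp only [abs_mul, abs_pow, sq_abs, abs_of_nonneg (cc_nonneg n)]
    have h1 : |z| ^ n ≤ (3/4:ℝ) ^ n := pow_le_pow_left₀ (abs_nonneg z) hzle _
    have hn : (0:ℝ) ≤ n := n.cast_nonneg
    have key : cc n * (((n:ℝ)+1/2)^2 * |z| ^ n) ≤ 1 * (((n:ℝ)+1/2)^2 * (3/4)^n) := by
      apply mul_le_mul (cc_le_one n) (mul_le_mul_of_nonneg_left h1 (by positivity)) (by positivity) one_pos.le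
    have hp : (0:ℝ) ≤ (3/4:ℝ)^n := by positivity
    calc cc n * (((n:ℝ)+1/2)^2 * |z| ^ n) ≤ 1 * (((n:ℝ)+1/2)^2 * (3/4)^n) := key
      _ ≤ ((n:ℝ) * (n:ℝ) * (3/4)^n + (n:ℝ) * (3/4)^n) + (3/4)^n := by nlinarith
  -- rewrite LHS as a single tsum
  rw [GG, HH, ← tsum_mul_left, ← tsum_mul_left, ← tsum_div_const,
    ← Summable.tsum_add (Sd.mul_left _) (Sb.mul_left _),
    ← Summable.tsum_sub ((Sd.mul_left _).add (Sb.mul_left _)) (Sa.div_const _)]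
  have key : ∀ n : ℕ,
      z * (1-z) * (cc n * ((n:ℝ) * (((n-1:ℕ):ℝ) * z ^ (n-2)))) + (1-2*z) * (cc n * ((n:ℝ) * z ^ (n-1)))
        - cc n * z ^ n / 4
      = cc n * ((n:ℝ)^2 * z ^ (n-1)) - cc n * (((n:ℝ)+1/2)^2 * z ^ n) := by
    intro n
    match n with
    | 0 => norm_num; ring
    | 1 => norm_num; ring
    
    | (k+2) =>
      have e1 : k + 2 - 1 = k + 1 := rfl
      have e2 : k + 2 - 2 = k := rfl
      rw [e1, e2]
      push_cast
      ring
  rw [tsum_congr key, Summable.tsum_sub SA SB, Summable.tsum_eq_zero_add SA]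
  have key2 : ∀ n : ℕ, cc (n+1) * (((n+1:ℕ):ℝ)^2 * z ^ ((n+1) - 1)) = cc n * (((n:ℝ)+1/2)^2 * z ^ n) := by
    intro n
    have e1 : n + 1 - 1 = n := rfl
    rw [e1]
    push_cast
    linear_combination z ^ n * cc_succ n
  rw [tsum_congr key2]
  norm_num

noncomputable def W1 (F : ℝ → ℝ) (K : ℝ) (s : ℝ) : ℝ :=
  K * (F (s/(s-1)) / (1-s)^2 - GG (s/(s-1)) / (1-s)^3)

noncomputable def W2 (F : ℝ → ℝ) (K : ℝ) (s : ℝ) : ℝ :=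
  K * (2 * F (s/(s-1)) / (1-s)^3 - 4 * GG (s/(s-1)) / (1-s)^4 + HH (s/(s-1)) / (1-s)^5)

lemma s_ne {s : ℝ} (hs : |s| < 1/3) : s - 1 ≠ 0 := by
  intro h; rw [sub_eq_zero] at h; subst h; norm_num at hs

lemma s_ne' {s : ℝ} (hs : |s| < 1/3) : (1:ℝ) - s ≠ 0 := by
  intro h; exact s_ne hs (by linarith [sub_eq_zero.2 (by linarith : s = 1)])

lemma mem34 {s : ℝ} (hs : |s| < 1/3) : s/(s-1) ∈ Metric.ball (0:ℝ) (3/4) := by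
  rw [Metric.mem_ball, dist_zero_right, Real.norm_eq_abs, abs_div]
  have h := abs_lt.1 hs
  have h2 : |s - 1| = 1 - s := by rw [abs_of_neg (by linarith : s - 1 < 0)]; ring
  rw [h2, div_lt_iff₀ (by linarith)]
  linarith [le_abs_self s]

lemma hasDerivAt_uu {s : ℝ} (hs : |s| < 1/3) :
    HasDerivAt (fun x : ℝ => x/(x-1)) (-(1/(s-1)^2)) s := by
  have h := (hasDerivAt_id s).div ((hasDerivAt_id s).sub_const 1) (s_ne hs)
  refine h.congr_deriv ?_
  simp only [id_eq]
  ring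

lemma hasDerivAt_w (F : ℝ → ℝ) (hFeq : F = fun z => ∑' n : ℕ, cc n * z ^ n) (K : ℝ)
    {s : ℝ} (hs : |s| < 1/3) :
    HasDerivAt (fun x => K / (1-x) * F (x/(x-1))) (W1 F K s) s := by
  have hFd : HasDerivAt F (GG (s/(s-1))) (s/(s-1)) := by rw [hFeq]; exact hG (mem34 hs)
  have hcomp := hFd.comp s (hasDerivAt_uu hs)
  have hq : HasDerivAt (fun x : ℝ => K/(1-x)) ((0*(1-s) - K*(0-1))/(1-s)^2) s :=
    (hasDerivAt_const s K).div ((hasDerivAt_const s 1).sub (hasDerivAt_id s)) (s_ne' hs)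
  refine (hq.mul hcomp).congr_deriv ?_
  simp only [Function.comp_apply]
  unfold W1
  have h1 := s_ne hs
  have h2 := s_ne' hs
  field_simp
  ring

lemma hasDerivAt_W1 (F : ℝ → ℝ) (hFeq : F = fun z => ∑' n : ℕ, cc n * z ^ n) (K : ℝ)
    {s : ℝ} (hs : |s| < 1/3) :
    HasDerivAt (W1 F K) (W2 F K s) s := by
  have hFd : HasDerivAt F (GG (s/(s-1))) (s/(s-1)) := by rw [hFeq]; exact hG (mem34 hs)
  have hGd : HasDerivAt GG (HH (s/(s-1))) (s/(s-1)) := hH (mem34 hs)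
  have hu := hasDerivAt_uu hs
  have hcF := hFd.comp s hu
  have hcG := hGd.comp s hu
  have hp2 : HasDerivAt (fun x : ℝ => (1-x)^2) (2*(1-s)^1*(0-1)) s :=
    ((hasDerivAt_const s 1).sub (hasDerivAt_id s)).pow 2
  have hp3 : HasDerivAt (fun x : ℝ => (1-x)^3) (3*(1-s)^2*(0-1)) s :=
    ((hasDerivAt_const s 1).sub (hasDerivAt_id s)).pow 3
  have h2 := s_ne' hs
  have hA := hcF.div hp2 (pow_ne_zero 2 h2)
  have hB := hcG.div hp3 (pow_ne_zero 3 h2)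
  have htot := (hA.sub hB).const_mul K
  refine htot.congr_deriv ?_
  simp only [Function.comp_apply]
  unfold W2
  have h1 := s_ne hs
  field_simp
  ring

lemma final_alg (f g h t K : ℝ) (h1 : t - 1 ≠ 0) (h2 : (1:ℝ) - t ≠ 0)
    (hE : t/(t-1) * (1 - t/(t-1)) * h + (1 - 2*(t/(t-1))) * g - f/4 = 0) :
    t*(1-t)^2 * (K*(2*f/(1-t)^3 - 4*g/(1-t)^4 + h/(1-t)^5))
      + (1-3*t)*(1-t)*(K*(f/(1-t)^2 - g/(1-t)^3)) + (t-3/4)*(K/(1-t)*f) = 0 := by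
  have key : t*(1-t)^2 * (K*(2*f/(1-t)^3 - 4*g/(1-t)^4 + h/(1-t)^5))
      + (1-3*t)*(1-t)*(K*(f/(1-t)^2 - g/(1-t)^3)) + (t-3/4)*(K/(1-t)*f)
      = (K/(t-1)) * (t/(t-1) * (1 - t/(t-1)) * h + (1 - 2*(t/(t-1))) * g - f/4) := by
    field_simp
    ring
  rw [key, hE, mul_zero]

theorem stmt_14 (F : ℝ → ℝ)
    (hF : ∀ z : ℝ, F z = ∑' m : ℕ,
      ((∏ i ∈ Finset.range m, ((1 : ℝ) / 2 + i)) ^ 2 / ((Nat.factorial m : ℝ)) ^ 2) * z ^ m)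
    (w : ℝ → ℝ)
    (hw : ∀ t : ℝ, w t = 3 * (Real.pi ^ 2 / 6) / (1 - t) * F (t / (t - 1))) :
    ∃ ε > (0 : ℝ), ∀ t : ℝ, |t| < ε →
      t * (1 - t) ^ 2 * deriv (deriv w) t + (1 - 3 * t) * (1 - t) * deriv w t
        + (t - 3 / 4) * w t = 0 := by
  have hFeq : F = fun z => ∑' n : ℕ, cc n * z ^ n := funext fun z => hF z
  set K : ℝ := 3 * (Real.pi ^ 2 / 6) with hK
  have hweq : w = fun x => K / (1-x) * F (x/(x-1)) := funext fun x => hw x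
  refine ⟨1/3, by norm_num, fun t ht => ?_⟩
  have hswd : ∀ s ∈ Metric.ball (0:ℝ) (1/3), HasDerivAt w (W1 F K s) s := by
    intro s hs
    rw [Metric.mem_ball, dist_zero_right, Real.norm_eq_abs] at hs
    rw [hweq]
    exact hasDerivAt_w F hFeq K hs
  have htb : t ∈ Metric.ball (0:ℝ) (1/3) := by
    rw [Metric.mem_ball, dist_zero_right, Real.norm_eq_abs]; exact ht
  have hd1 : deriv w t = W1 F K t := (hswd t htb).deriv
  have hEqOn : Set.EqOn (deriv w) (W1 F K) (Metric.ball (0:ℝ) (1/3)) :=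
    fun s hs => (hswd s hs).deriv
  have hd2 : deriv (deriv w) t = W2 F K t := by
    have h1 : deriv w =ᶠ[nhds t] W1 F K :=
      Filter.eventuallyEq_of_mem (Metric.isOpen_ball.mem_nhds htb) hEqOn
    rw [h1.deriv_eq]
    exact (hasDerivAt_W1 F hFeq K ht).deriv
  rw [hd1, hd2, hw t]
  have hE := hyper_ode (ball_abs (mem34 ht))
  have hFz : F (t/(t-1)) = ∑' n : ℕ, cc n * (t/(t-1)) ^ n := hF _
  rw [← hFz] at hE
  unfold W1 W2
  have h1 := s_ne ht
  have h2 := s_ne' ht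
  exact final_alg (F (t/(t-1))) (GG (t/(t-1))) (HH (t/(t-1))) t K h1 h2 hE
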